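/- Let a < b, let f : [a-h,b] → ℂⁿ have property (A) with f(t) = 0 on [a-h,a), and let q : [a,b] → ℂ be continuous. Then the map g : [a-h,b] → ℂⁿ defined by g(t) = ∫_{(a,t)} q(s) f(t-s+a) dm(s) for a < t ≤ b and g(t) = 0 for a-h ≤ t ≤ a is continuous. -/

import Mathlib

open MeasureTheory Filter Topology

/-- Property (A): pointwise limit of a uniformly bounded sequence of continuous maps. -/
def PropA {X : Type*} [TopologicalSpace X] {E : Type*} [NormedAddCommGroup E]
    (φ : X → E) : Prop :=
  ∃ f : ℕ → X → E, (∀ m, Continuous (f m)) ∧ (∃ C : ℝ, ∀ m x, ‖f m x‖ ≤ C) ∧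
    ∀ x, Tendsto (fun m => f m x) atTop (𝓝 (φ x))

/-- Reflection invariance of the Lebesgue integral on `ℝ`. -/
lemma integral_refl_eq {E : Type*} [NormedAddCommGroup E] [NormedSpace ℝ E]
    (φ : ℝ → E) (c : ℝ) : ∫ x, φ (c - x) = ∫ x, φ x := by
  have h1 : ∫ x, φ (c - x) = ∫ x, (fun y => φ (c + y)) (-x) := by
    simp [sub_eq_add_neg]
  rw [h1, integral_neg_eq_self (fun y => φ (c + y)) volume,
    integral_add_left_eq_self φ c]

/-- For `a < b`, `f : [a-h,b] → ℂⁿ` with property (A) vanishing on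
`[a-h,a)`, and continuous `q : [a,b] → ℂ`, the map
`g(t) = ∫_{(a,t)} q(s) f(t-s+a) dm(s)` for `a < t ≤ b`, `g = 0` on `[a-h,a]`,
is continuous. -/
theorem stmt_11 (n : ℕ) (h : ℝ) (hh : 0 < h) (a b : ℝ) (hab : a < b)
    (f : ℝ → Fin n → ℂ) (hfA : PropA fun x : Set.Icc (a - h) b => f ↑x)
    (hf0 : ∀ r ∈ Set.Ico (a - h) a, f r = 0)
    (q : ℝ → ℂ) (hq : ContinuousOn q (Set.Icc a b)) :
    ContinuousOn
      (fun t => if a < t then (∫ s in Set.Ioo a t, q s • f (t - s + a)) else 0)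
      (Set.Icc (a - h) b) := by
  obtain ⟨fm, hfm_cont, ⟨C, hC⟩, hf_tend⟩ := hfA
  have hahb : a - h ≤ b := by linarith
  set S : Set ℝ := Set.Icc (a - h) b with hS
  have hSm : MeasurableSet S := measurableSet_Icc
  -- measurability of f on the subtype
  have hmeas_sub : Measurable (fun x : S => f ↑x) :=
    measurable_of_tendsto_metrizable (fun m => (hfm_cont m).measurable)
      (tendsto_pi_nhds.mpr hf_tend)
  -- extended function
  set F : ℝ → Fin n → ℂ := Function.extend (Subtype.val : S → ℝ) (fun x : S => f ↑x) 0 with hFdef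
  have hFeq : ∀ r ∈ S, F r = f r := by
    intro r hr
    have : F ((⟨r, hr⟩ : S) : ℝ) = f r := Subtype.val_injective.extend_apply _ _ _
    simpa using this
  have hFmeas : Measurable F :=
    (MeasurableEmbedding.subtype_coe hSm).measurable_extend hmeas_sub measurable_const
  -- bound on F
  set C' : ℝ := max C 0 with hC'def
  have hC'0 : 0 ≤ C' := le_max_right _ _
  have hFC : ∀ r, ‖F r‖ ≤ C' := by
    intro r
    by_cases hr : r ∈ S
    · rw [hFeq r hr]
      have := le_of_tendsto ((hf_tend ⟨r, hr⟩).norm)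
        (Eventually.of_forall fun m => hC m ⟨r, hr⟩)
      exact this.trans (le_max_left _ _)
    · have : F r = 0 := by
        apply Function.extend_apply'
        rintro ⟨x, rfl⟩
        exact hr x.2
      simp [this, hC'0]
  -- bound on q
  obtain ⟨M, hM⟩ := isCompact_Icc.exists_bound_of_continuousOn hq
  set M' : ℝ := max M 0 with hM'def
  have hM'0 : 0 ≤ M' := le_max_right _ _
  have hM' : ∀ x ∈ Set.Icc a b, ‖q x‖ ≤ M' := fun x hx => (hM x hx).trans (le_max_left _ _)
  -- the reflected integrand
  set G : ℝ → ℝ → Fin n → ℂ :=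
    fun t => (Set.Ioo a t).indicator (fun s => q (t + a - s) • F s) with hGdef
  -- the target function equals t ↦ ∫ s, G t s on S
  have key : Set.EqOn
      (fun t => if a < t then (∫ s in Set.Ioo a t, q s • f (t - s + a)) else 0)
      (fun t => ∫ s, G t s) S := by
    intro t ht
    by_cases hat : a < t
    · have htb : t ≤ b := ht.2
      simp only [if_pos hat]
      have e1 : ∫ s in Set.Ioo a t, q s • f (t - s + a)
          = ∫ s in Set.Ioo a t, q s • F (t - s + a) := by
        refine setIntegral_congr_fun measurableSet_Ioo fun s hs => ?_
        rw [hFeq]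
        constructor
        · have : a < t - s + a := by linarith [hs.2]
          linarith
        · have : t - s + a < t := by linarith [hs.1]
          linarith
      have e2 : ∫ s in Set.Ioo a t, q s • F (t - s + a)
          = ∫ s, (Set.Ioo a t).indicator (fun s => q s • F (t - s + a)) s :=
        (integral_indicator measurableSet_Ioo).symm
      have e3 : (fun x => (Set.Ioo a t).indicator
            (fun s => q s • F (t - s + a)) (t + a - x)) = G t := by
        funext x
        by_cases hx : x ∈ Set.Ioo a t
        · have hx' : t + a - x ∈ Set.Ioo a t := ⟨by linarith [hx.2], by linarith [hx.1]⟩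
          simp only [Set.indicator_of_mem hx', Set.indicator_of_mem hx]
          have : t - (t + a - x) + a = x := by ring
          rw [this]
          exact (Set.indicator_of_mem hx (fun s => q (t + a - s) • F s)).symm
        · have hx' : t + a - x ∉ Set.Ioo a t := by
            intro hmem
            exact hx ⟨by linarith [hmem.2], by linarith [hmem.1]⟩
          simp only [Set.indicator_of_notMem hx', Set.indicator_of_notMem hx]
          exact (Set.indicator_of_notMem hx (fun s => q (t + a - s) • F s)).symm
      rw [e1, e2, ← integral_refl_eq
        (fun s => (Set.Ioo a t).indicator (fun s => q s • F (t - s + a)) s) (t + a)]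
      simp only [e3]
    · simp only [if_neg hat]
      have : Set.Ioo a t = ∅ := Set.Ioo_eq_empty hat
      rw [show (∫ s, G t s) = 0 from by simp [hGdef, this]]
  -- continuity of t ↦ ∫ s, G t s on S
  have hcont : ContinuousOn (fun t => ∫ s, G t s) S := by
    intro t₀ ht₀
    have : Tendsto (fun t => ∫ s, G t s) (𝓝[S] t₀) (𝓝 (∫ s, G t₀ s)) := by
      apply tendsto_integral_filter_of_dominated_convergence
        ((Set.Ioo a b).indicator fun _ => M' * C')
      -- measurability
      · filter_upwards [self_mem_nhdsWithin] with t ht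
        by_cases hat : a < t
        · rw [hGdef]
          rw [aestronglyMeasurable_indicator_iff measurableSet_Ioo]
          have hq' : ContinuousOn (fun s => q (t + a - s)) (Set.Ioo a t) := by
            apply hq.comp ((continuous_const.sub continuous_id).continuousOn)
            intro s hs
            exact ⟨by simp; linarith [hs.2], by simp; linarith [hs.1, ht.2]⟩
          exact (hq'.aestronglyMeasurable measurableSet_Ioo).smul
            (hFmeas.aestronglyMeasurable.restrict)
        · have : G t = fun _ => 0 := by
            funext s
            simp [hGdef, Set.Ioo_eq_empty hat]
          rw [this]
          exact aestronglyMeasurable_const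
      -- domination
      · filter_upwards [self_mem_nhdsWithin] with t ht
        refine Eventually.of_forall fun s => ?_
        by_cases hs : s ∈ Set.Ioo a t
        · have hsb : s ∈ Set.Ioo a b := ⟨hs.1, lt_of_lt_of_le hs.2 ht.2⟩
          rw [hGdef]
          simp only [Set.indicator_of_mem hs, Set.indicator_of_mem hsb]
          rw [norm_smul]
          have hqs : ‖q (t + a - s)‖ ≤ M' := by
            apply hM'
            exact ⟨by linarith [hs.2], by linarith [hs.1, ht.2]⟩
          exact mul_le_mul hqs (hFC s) (norm_nonneg _) hM'0
        · rw [hGdef]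
          simp only [Set.indicator_of_notMem hs]
          simp only [norm_zero]
          exact Set.indicator_nonneg (fun _ _ => mul_nonneg hM'0 hC'0) s
      -- integrability of the bound
      · exact ((integrableOn_const_iff).mpr (Or.inr measure_Ioo_lt_top)).integrable_indicator
          measurableSet_Ioo
      -- pointwise limit
      · have hae : ∀ᵐ s : ℝ, s ≠ a ∧ s ≠ t₀ := by
          have h1 : (volume : Measure ℝ) {s : ℝ | ¬(s ≠ a ∧ s ≠ t₀)} = 0 := by
            have : {s : ℝ | ¬(s ≠ a ∧ s ≠ t₀)} ⊆ {a} ∪ {t₀} := by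
              intro s hs
              simp only [Set.mem_setOf_eq, not_and_or, not_not] at hs
              rcases hs with rfl | rfl
              · exact Or.inl rfl
              · exact Or.inr rfl
            exact measure_mono_null this
              (le_antisymm (le_trans (measure_union_le _ _) (by simp)) zero_le)
          exact ae_iff.mpr h1
        filter_upwards [hae] with s hs
        rcases hs with ⟨hsa, hst⟩
        by_cases hcase : a < s ∧ s < t₀
        · -- s in the open interval
          have hmem : s ∈ Set.Ioo a t₀ := ⟨hcase.1, hcase.2⟩
          have hev : ∀ᶠ t in 𝓝[S] t₀, G t s = q (t + a - s) • F s := by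
            filter_upwards [mem_nhdsWithin_of_mem_nhds (Ioi_mem_nhds hcase.2)] with t ht
            have hst' : s ∈ Set.Ioo a t := ⟨hcase.1, ht⟩
            exact Set.indicator_of_mem hst' _
          have hpt : t₀ + a - s ∈ Set.Ioo a b :=
            ⟨by linarith [hcase.2], by linarith [hcase.1, ht₀.2]⟩
          have hcq : ContinuousAt q (t₀ + a - s) :=
            hq.continuousAt (Icc_mem_nhds hpt.1 hpt.2)
          have hlim : Tendsto (fun t => q (t + a - s) • F s) (𝓝[S] t₀)
              (𝓝 (q (t₀ + a - s) • F s)) := by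
            have h1 : Tendsto (fun t : ℝ => t + a - s) (𝓝 t₀) (𝓝 (t₀ + a - s)) :=
              ((continuous_id.add continuous_const).sub continuous_const).tendsto t₀
            exact (((hcq.tendsto.comp h1).mono_left nhdsWithin_le_nhds).smul_const (F s))
          have hG0 : G t₀ s = q (t₀ + a - s) • F s :=
            Set.indicator_of_mem hmem _
          rw [hG0]
          exact hlim.congr' (hev.mono fun t ht => ht.symm)
        · -- s outside
          have hs' : s < a ∨ t₀ < s := by
            rcases not_and_or.mp hcase with h1 | h1
            · exact Or.inl (lt_of_le_of_ne (not_lt.mp h1) hsa)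
            · exact Or.inr (lt_of_le_of_ne (not_lt.mp h1) (Ne.symm hst))
          have hG0 : G t₀ s = 0 := by
            rw [hGdef]
            apply Set.indicator_of_notMem
            intro hmem
            rcases hs' with h1 | h1
            · exact absurd hmem.1 (not_lt.mpr h1.le)
            · exact absurd hmem.2 (not_lt.mpr h1.le)
          have hev : ∀ᶠ t in 𝓝[S] t₀, G t s = 0 := by
            rcases hs' with h1 | h1
            · refine Eventually.of_forall fun t => ?_
              rw [hGdef]
              apply Set.indicator_of_notMem
              intro hmem
              exact absurd hmem.1 (not_lt.mpr h1.le)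
            · filter_upwards [mem_nhdsWithin_of_mem_nhds (Iio_mem_nhds h1)] with t ht
              rw [hGdef]
              apply Set.indicator_of_notMem
              intro hmem
              exact absurd hmem.2 (not_lt.mpr ht.le)
          rw [hG0]
          exact tendsto_const_nhds.congr' (hev.mono fun t ht => ht.symm)
    exact this
  exact hcont.congr key
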